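/- Let n ≥ 2 be an integer, α ∈ [0,1), c̃ > 0, λ := arccosh((1 + c̃⁻¹)/(1 − α)), and let B be the (n−1)×(n−1) tridiagonal matrix with diagonal entries 1 + c̃⁻¹ and off-diagonal entries −(1−α)/2. For 1 ≤ i, j ≤ n define D_{ij} := ((1−α)/2)·(B⁻¹_{(i−1)j} + B⁻¹_{i(j−1)} − B⁻¹_{ij} − B⁻¹_{(i−1)(j−1)}), where any entry of B⁻¹ whose row or column index equals 0 or n is taken to be 0. Then D_{ij} = −[i = j] + 2·D̃_{ij}·tanh(λ/2)/sinh(nλ), where D̃_{ij} := cosh((min(i,j) − 1/2)λ)·cosh((n − max(i,j) + 1/2)λ) and [i = j] equals 1 if i = j and 0 otherwise. -/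

import Mathlib

open Real Matrix Finset

noncomputable section

/-- Real inverse hyperbolic cosine. -/
def arcosh (x : ℝ) : ℝ := Real.log (x + Real.sqrt (x ^ 2 - 1))

/-- The regularized reduced kernel matrix: tridiagonal with diagonal `1 + c̃⁻¹`
and off-diagonal `−(1−α)/2`. -/
def Bmat (n : ℕ) (α ctil : ℝ) : Matrix (Fin (n - 1)) (Fin (n - 1)) ℝ :=
  fun i j =>
    if i = j then 1 + ctil⁻¹
    else if (i : ℕ) + 1 = (j : ℕ) ∨ (j : ℕ) + 1 = (i : ℕ) then -((1 - α) / 2)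
    else 0

/-- Entry `(i, j)` of `B⁻¹` in 1-based indexing, taken to be `0` when the row or
column index is `0` or `n` (i.e. outside `1,…,n−1`). -/
def BinvAt (n : ℕ) (α ctil : ℝ) (i j : ℕ) : ℝ :=
  if h : 1 ≤ i ∧ i ≤ n - 1 ∧ 1 ≤ j ∧ j ≤ n - 1 then
    (Bmat n α ctil)⁻¹ ⟨i - 1, by omega⟩ ⟨j - 1, by omega⟩
  else 0

/-- `Dᵢⱼ := ((1−α)/2)(B⁻¹₍ᵢ₋₁₎ⱼ + B⁻¹ᵢ₍ⱼ₋₁₎ − B⁻¹ᵢⱼ − B⁻¹₍ᵢ₋₁₎₍ⱼ₋₁₎)`. -/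
def Dmat (n : ℕ) (α ctil : ℝ) (i j : ℕ) : ℝ :=
  ((1 - α) / 2) *
    (BinvAt n α ctil (i - 1) j + BinvAt n α ctil i (j - 1) -
      BinvAt n α ctil i j - BinvAt n α ctil (i - 1) (j - 1))

/-- `D̃ᵢⱼ = cosh((min(i,j) − 1/2)λ)·cosh((n − max(i,j) + 1/2)λ)`. -/
def Dtil (n : ℕ) (l : ℝ) (i j : ℕ) : ℝ :=
  Real.cosh (((min i j : ℕ) - (1 : ℝ) / 2) * l) *
    Real.cosh (((n : ℝ) - (max i j : ℕ) + 1 / 2) * l)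

/-! ### Auxiliary machinery -/

lemma arcosh_facts {x : ℝ} (hx : 1 < x) :
    Real.cosh (_root_.arcosh x) = x ∧ Real.sinh (_root_.arcosh x) = Real.sqrt (x^2 - 1) ∧ 0 < _root_.arcosh x := by
  have hx0 : (0:ℝ) ≤ x ^ 2 - 1 := by nlinarith
  have hs0 : 0 ≤ Real.sqrt (x ^ 2 - 1) := Real.sqrt_nonneg _
  have hs2 : Real.sqrt (x ^ 2 - 1) ^ 2 = x ^ 2 - 1 := Real.sq_sqrt hx0
  set s := Real.sqrt (x ^ 2 - 1) with hs
  have hy1 : 1 < x + s := by nlinarith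
  have hy0 : 0 < x + s := by linarith
  have hexp : Real.exp (_root_.arcosh x) = x + s := Real.exp_log hy0
  have hinv : Real.exp (-(_root_.arcosh x)) = x - s := by
    rw [Real.exp_neg, hexp]
    field_simp
    nlinarith
  refine ⟨?_, ?_, ?_⟩
  · rw [Real.cosh_eq, hexp, hinv]; ring
  · rw [Real.sinh_eq, hexp, hinv]; ring
  · exact Real.log_pos hy1

/-- Green's function candidate for the inverse of `Bmat`. -/
def gfun (n : ℕ) (l b : ℝ) (i j : ℕ) : ℝ :=
  Real.sinh ((min i j : ℕ) * l) * Real.sinh (((n : ℝ) - (max i j : ℕ)) * l) /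
    (b * Real.sinh l * Real.sinh (n * l))

def Mmat (n : ℕ) (l b : ℝ) : Matrix (Fin (n - 1)) (Fin (n - 1)) ℝ :=
  fun i j => gfun n l b ((i : ℕ) + 1) ((j : ℕ) + 1)

lemma gfun_comm (n : ℕ) (l b : ℝ) (i j : ℕ) : gfun n l b i j = gfun n l b j i := by
  simp [gfun, min_comm, max_comm]

lemma gfun_zero_left (n : ℕ) (l b : ℝ) (j : ℕ) : gfun n l b 0 j = 0 := by
  simp [gfun]

lemma gfun_top_left (n : ℕ) (l b : ℝ) (j : ℕ) (hj : j ≤ n) : gfun n l b n j = 0 := by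
  have : max n j = n := max_eq_left hj
  simp [gfun, this]

lemma gfun_zero_right (n : ℕ) (l b : ℝ) (i : ℕ) : gfun n l b i 0 = 0 := by
  rw [gfun_comm]; exact gfun_zero_left n l b i

lemma gfun_top_right (n : ℕ) (l b : ℝ) (i : ℕ) (hi : i ≤ n) : gfun n l b i n = 0 := by
  rw [gfun_comm]; exact gfun_top_left n l b i hi

lemma recur (n : ℕ) (l b : ℝ) (hl : 0 < l) (hb : 0 < b) (hn : 2 ≤ n)
    (p q : ℕ) (hp1 : 1 ≤ p) (hp : p ≤ n - 1) (hq1 : 1 ≤ q) (hq : q ≤ n - 1) :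
    2 * b * Real.cosh l * gfun n l b p q - b * gfun n l b (p - 1) q
      - b * gfun n l b (p + 1) q = if p = q then 1 else 0 := by
  have hsl : Real.sinh l ≠ 0 := by positivity
  have hnl : (0:ℝ) < n * l := by
    have : (0:ℝ) < (n:ℝ) := by exact_mod_cast (by omega : 0 < n)
    positivity
  have hsN : Real.sinh ((n:ℝ) * l) ≠ 0 := by positivity
  have hd : b * Real.sinh l * Real.sinh ((n:ℝ) * l) ≠ 0 := by positivity
  have cp : ((p - 1 : ℕ) : ℝ) = (p : ℝ) - 1 := by
    rw [Nat.cast_sub hp1]; norm_num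
  rcases lt_trichotomy p q with h | h | h
  · -- p < q
    have e1 : min p q = p := min_eq_left h.le
    have e2 : max p q = q := max_eq_right h.le
    have e3 : min (p - 1) q = p - 1 := min_eq_left (by omega)
    have e4 : max (p - 1) q = q := max_eq_right (by omega)
    have e5 : min (p + 1) q = p + 1 := min_eq_left (by omega)
    have e6 : max (p + 1) q = q := max_eq_right (by omega)
    rw [if_neg h.ne]
    simp only [gfun, e1, e2, e3, e4, e5, e6, cp]
    push_cast
    have key : 2 * b * Real.cosh l * (Real.sinh ((p:ℝ) * l) * Real.sinh (((n:ℝ) - q) * l))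
        - b * (Real.sinh (((p:ℝ) - 1) * l) * Real.sinh (((n:ℝ) - q) * l))
        - b * (Real.sinh (((p:ℝ) + 1) * l) * Real.sinh (((n:ℝ) - q) * l)) = 0 := by
      have a1 : ((p:ℝ) - 1) * l = (p:ℝ) * l - l := by ring
      have a2 : ((p:ℝ) + 1) * l = (p:ℝ) * l + l := by ring
      rw [a1, a2, Real.sinh_sub, Real.sinh_add]
      ring
    have expand : 2 * b * Real.cosh l *
          (Real.sinh ((p:ℝ) * l) * Real.sinh (((n:ℝ) - q) * l) /
            (b * Real.sinh l * Real.sinh ((n:ℝ) * l)))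
        - b * (Real.sinh (((p:ℝ) - 1) * l) * Real.sinh (((n:ℝ) - q) * l) /
            (b * Real.sinh l * Real.sinh ((n:ℝ) * l)))
        - b * (Real.sinh (((p:ℝ) + 1) * l) * Real.sinh (((n:ℝ) - q) * l) /
            (b * Real.sinh l * Real.sinh ((n:ℝ) * l)))
        = (2 * b * Real.cosh l * (Real.sinh ((p:ℝ) * l) * Real.sinh (((n:ℝ) - q) * l))
            - b * (Real.sinh (((p:ℝ) - 1) * l) * Real.sinh (((n:ℝ) - q) * l))
            - b * (Real.sinh (((p:ℝ) + 1) * l) * Real.sinh (((n:ℝ) - q) * l)))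
            / (b * Real.sinh l * Real.sinh ((n:ℝ) * l)) := by ring
    rw [expand, key, zero_div]
  · -- p = q
    subst h
    have e1 : min p p = p := min_self p
    have e2 : max p p = p := max_self p
    have e3 : min (p - 1) p = p - 1 := min_eq_left (by omega)
    have e4 : max (p - 1) p = p := max_eq_right (by omega)
    have e5 : min (p + 1) p = p := min_eq_right (by omega)
    have e6 : max (p + 1) p = p + 1 := max_eq_left (by omega)
    rw [if_pos rfl]
    simp only [gfun, e1, e2, e3, e4, e5, e6, cp]
    push_cast
    have key : 2 * b * Real.cosh l * (Real.sinh ((p:ℝ) * l) * Real.sinh (((n:ℝ) - p) * l))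
        - b * (Real.sinh (((p:ℝ) - 1) * l) * Real.sinh (((n:ℝ) - p) * l))
        - b * (Real.sinh ((p:ℝ) * l) * Real.sinh (((n:ℝ) - (p + 1)) * l))
        = b * (Real.sinh l * Real.sinh ((n:ℝ) * l)) := by
      have a1 : ((p:ℝ) - 1) * l = (p:ℝ) * l - l := by ring
      have a2 : ((n:ℝ) - p) * l = (n:ℝ) * l - (p:ℝ) * l := by ring
      have a3 : ((n:ℝ) - (p + 1)) * l = ((n:ℝ) * l - (p:ℝ) * l) - l := by ring
      rw [a1, a2, a3]
      simp only [Real.sinh_sub, Real.cosh_sub]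
      linear_combination (b * Real.sinh l * Real.sinh ((n:ℝ)*l)) *
        Real.cosh_sq_sub_sinh_sq ((p:ℝ)*l)
    have expand : 2 * b * Real.cosh l *
          (Real.sinh ((p:ℝ) * l) * Real.sinh (((n:ℝ) - p) * l) /
            (b * Real.sinh l * Real.sinh ((n:ℝ) * l)))
        - b * (Real.sinh (((p:ℝ) - 1) * l) * Real.sinh (((n:ℝ) - p) * l) /
            (b * Real.sinh l * Real.sinh ((n:ℝ) * l)))
        - b * (Real.sinh ((p:ℝ) * l) * Real.sinh (((n:ℝ) - (p + 1)) * l) /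
            (b * Real.sinh l * Real.sinh ((n:ℝ) * l)))
        = (2 * b * Real.cosh l * (Real.sinh ((p:ℝ) * l) * Real.sinh (((n:ℝ) - p) * l))
            - b * (Real.sinh (((p:ℝ) - 1) * l) * Real.sinh (((n:ℝ) - p) * l))
            - b * (Real.sinh ((p:ℝ) * l) * Real.sinh (((n:ℝ) - (p + 1)) * l)))
            / (b * Real.sinh l * Real.sinh ((n:ℝ) * l)) := by
      ring
    rw [expand, key]
    rw [mul_assoc]
    exact div_self (by rw [← mul_assoc]; exact hd)
  · -- q < p
    have e1 : min p q = q := min_eq_right h.le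
    have e2 : max p q = p := max_eq_left h.le
    have e3 : min (p - 1) q = q := min_eq_right (by omega)
    have e4 : max (p - 1) q = p - 1 := max_eq_left (by omega)
    have e5 : min (p + 1) q = q := min_eq_right (by omega)
    have e6 : max (p + 1) q = p + 1 := max_eq_left (by omega)
    rw [if_neg (by omega)]
    simp only [gfun, e1, e2, e3, e4, e5, e6, cp]
    push_cast
    have key : 2 * b * Real.cosh l * (Real.sinh ((q:ℝ) * l) * Real.sinh (((n:ℝ) - p) * l))
        - b * (Real.sinh ((q:ℝ) * l) * Real.sinh (((n:ℝ) - ((p:ℝ) - 1)) * l))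
        - b * (Real.sinh ((q:ℝ) * l) * Real.sinh (((n:ℝ) - ((p:ℝ) + 1)) * l)) = 0 := by
      have a1 : ((n:ℝ) - ((p:ℝ) - 1)) * l = ((n:ℝ) - p) * l + l := by ring
      have a2 : ((n:ℝ) - ((p:ℝ) + 1)) * l = ((n:ℝ) - p) * l - l := by ring
      rw [a1, a2, Real.sinh_sub, Real.sinh_add]
      ring
    have expand : 2 * b * Real.cosh l *
          (Real.sinh ((q:ℝ) * l) * Real.sinh (((n:ℝ) - p) * l) /
            (b * Real.sinh l * Real.sinh ((n:ℝ) * l)))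
        - b * (Real.sinh ((q:ℝ) * l) * Real.sinh (((n:ℝ) - ((p:ℝ) - 1)) * l) /
            (b * Real.sinh l * Real.sinh ((n:ℝ) * l)))
        - b * (Real.sinh ((q:ℝ) * l) * Real.sinh (((n:ℝ) - ((p:ℝ) + 1)) * l) /
            (b * Real.sinh l * Real.sinh ((n:ℝ) * l)))
        = (2 * b * Real.cosh l * (Real.sinh ((q:ℝ) * l) * Real.sinh (((n:ℝ) - p) * l))
            - b * (Real.sinh ((q:ℝ) * l) * Real.sinh (((n:ℝ) - ((p:ℝ) - 1)) * l))
            - b * (Real.sinh ((q:ℝ) * l) * Real.sinh (((n:ℝ) - ((p:ℝ) + 1)) * l)))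
            / (b * Real.sinh l * Real.sinh ((n:ℝ) * l)) := by ring
    rw [expand, key, zero_div]

lemma Bmat_mul_Mmat (n : ℕ) (α ctil l : ℝ) (hn : 2 ≤ n) (hl : 0 < l)
    (hb : 0 < (1 - α) / 2)
    (hdiag : 1 + ctil⁻¹ = 2 * ((1 - α) / 2) * Real.cosh l) :
    Bmat n α ctil * Mmat n l ((1 - α) / 2) = 1 := by
  set b := (1 - α) / 2 with hbdef
  ext i k
  rw [Matrix.mul_apply]
  have hsplit : ∀ j : Fin (n - 1), Bmat n α ctil i j * Mmat n l b j k =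
      (if j = i then (1 + ctil⁻¹) * Mmat n l b i k else 0)
      + ((if (j : ℕ) + 1 = (i : ℕ) then -b * Mmat n l b j k else 0)
      + (if (j : ℕ) = (i : ℕ) + 1 then -b * Mmat n l b j k else 0)) := by
    intro j
    simp only [Bmat]
    by_cases h1 : i = j
    · subst h1
      rw [if_pos rfl, if_pos rfl, if_neg (by omega), if_neg (by omega)]
      ring
    · have h1' : ¬ j = i := fun h => h1 h.symm
      rw [if_neg h1, if_neg h1']
      by_cases h2 : (i : ℕ) + 1 = (j : ℕ)
      · rw [if_pos (Or.inl h2), if_neg (by omega), if_pos (by omega)]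
        ring
      · by_cases h3 : (j : ℕ) + 1 = (i : ℕ)
        · rw [if_pos (Or.inr h3), if_pos h3, if_neg (by omega)]
          ring
        · have : ¬ ((i:ℕ) + 1 = (j:ℕ) ∨ (j:ℕ) + 1 = (i:ℕ)) := by omega
          rw [if_neg this, if_neg h3, if_neg (by omega)]
          ring
  rw [Finset.sum_congr rfl fun j _ => hsplit j, Finset.sum_add_distrib,
    Finset.sum_add_distrib, Finset.sum_ite_eq' univ i, if_pos (mem_univ i)]
  have hm : (n : ℕ) - 1 ≥ 1 := by omega
  -- second sum
  have s2 : (∑ j : Fin (n-1), if (j : ℕ) + 1 = (i : ℕ) then -b * Mmat n l b j k else 0)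
      = -b * gfun n l b (i : ℕ) ((k : ℕ) + 1) := by
    by_cases hi : 1 ≤ (i : ℕ)
    · have hlt : (i : ℕ) - 1 < n - 1 := by omega
      have : ∀ j : Fin (n-1), ((j : ℕ) + 1 = (i : ℕ)) ↔ j = ⟨(i:ℕ) - 1, hlt⟩ := by
        intro j
        constructor
        · intro h; exact Fin.ext (by simp; omega)
        · intro h; subst h; simp; omega
      simp only [this]
      rw [Finset.sum_ite_eq' univ, if_pos (mem_univ _)]
      have : ((⟨(i:ℕ) - 1, hlt⟩ : Fin (n-1)) : ℕ) + 1 = (i : ℕ) := by simp; omega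
      rw [Mmat, this]
    · have hi0 : (i : ℕ) = 0 := by omega
      rw [hi0, gfun_zero_left, mul_zero]
      refine Finset.sum_eq_zero fun j _ => if_neg (by omega)
  -- third sum
  have s3 : (∑ j : Fin (n-1), if (j : ℕ) = (i : ℕ) + 1 then -b * Mmat n l b j k else 0)
      = -b * gfun n l b ((i : ℕ) + 2) ((k : ℕ) + 1) := by
    by_cases hi : (i : ℕ) + 1 < n - 1
    · have : ∀ j : Fin (n-1), ((j : ℕ) = (i : ℕ) + 1) ↔ j = ⟨(i:ℕ) + 1, hi⟩ := by
        intro j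
        constructor
        · intro h; exact Fin.ext (by simpa using h)
        · intro h; subst h; rfl
      simp only [this]
      rw [Finset.sum_ite_eq' univ, if_pos (mem_univ _)]
      rfl
    · have hi2 : (i : ℕ) + 2 = n := by omega
      rw [hi2, gfun_top_left n l b _ (by omega), mul_zero]
      refine Finset.sum_eq_zero fun j _ => if_neg (by omega)
  rw [s2, s3, hdiag]
  have := recur n l b hl hb hn ((i:ℕ)+1) ((k:ℕ)+1) (by omega) (by omega) (by omega) (by omega)
  simp only [Nat.add_sub_cancel] at this
  rw [Matrix.one_apply]
  have hMe : Mmat n l b i k = gfun n l b ((i:ℕ)+1) ((k:ℕ)+1) := rfl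
  rw [hMe]
  rw [show (2 * ((1-α)/2) * Real.cosh l) * gfun n l b ((i:ℕ)+1) ((k:ℕ)+1)
      + (-b * gfun n l b (i:ℕ) ((k:ℕ)+1) + -b * gfun n l b ((i:ℕ)+2) ((k:ℕ)+1))
      = 2 * b * Real.cosh l * gfun n l b ((i:ℕ)+1) ((k:ℕ)+1)
        - b * gfun n l b ((i:ℕ)+1-1) ((k:ℕ)+1) - b * gfun n l b ((i:ℕ)+1+1) ((k:ℕ)+1) by
    simp only [Nat.add_sub_cancel, hbdef]; ring]
  simp only [Nat.add_sub_cancel]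
  rw [this]
  have : ((i:ℕ) + 1 = (k:ℕ) + 1) ↔ i = k := by
    constructor
    · intro h; exact Fin.ext (by omega)
    · intro h; subst h; rfl
  simp [this, Fin.ext_iff]

lemma sinh_diff (l y : ℝ) : Real.sinh (y + l/2) - Real.sinh (y - l/2)
    = 2 * Real.sinh (l/2) * Real.cosh y := by
  simp [Real.sinh_add, Real.sinh_sub]; ring

lemma cross_id (l N X : ℝ) :
    Real.sinh (X*l) * Real.sinh ((N - (X-1))*l) - Real.sinh ((X-1)*l) * Real.sinh ((N-X)*l)
      = Real.sinh l * Real.sinh (N*l) := by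
  have e1 : (X-1)*l = X*l - l := by ring
  have e2 : (N - (X-1))*l = (N*l - X*l) + l := by ring
  have e3 : (N - X)*l = N*l - X*l := by ring
  rw [e1, e2, e3]
  simp only [Real.sinh_sub, Real.cosh_sub, Real.sinh_add, Real.cosh_add]
  linear_combination (Real.sinh l * Real.sinh (N*l)) * Real.cosh_sq_sub_sinh_sq (X*l)

lemma keyD_off (l N X Y : ℝ) (hl : 0 < l) (hN : Real.sinh (N*l) ≠ 0) :
    (Real.sinh ((X-1)*l) * Real.sinh ((N-Y)*l) + Real.sinh (X*l) * Real.sinh ((N-(Y-1))*l)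
      - Real.sinh (X*l) * Real.sinh ((N-Y)*l) - Real.sinh ((X-1)*l) * Real.sinh ((N-(Y-1))*l))
      / (Real.sinh l * Real.sinh (N*l))
    = 2 * (Real.cosh ((X - 1/2)*l) * Real.cosh ((N - Y + 1/2)*l)) * Real.tanh (l/2)
        / Real.sinh (N*l) := by
  have hs2 : (0:ℝ) < Real.sinh (l/2) := by positivity
  have hc2 : (0:ℝ) < Real.cosh (l/2) := Real.cosh_pos _
  have d1 : Real.sinh (X*l) - Real.sinh ((X-1)*l)
      = 2 * Real.sinh (l/2) * Real.cosh ((X - 1/2)*l) := by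
    have e1 : X*l = (X - 1/2)*l + l/2 := by ring
    have e2 : (X-1)*l = (X - 1/2)*l - l/2 := by ring
    rw [e1, e2, sinh_diff]
  have d2 : Real.sinh ((N-(Y-1))*l) - Real.sinh ((N-Y)*l)
      = 2 * Real.sinh (l/2) * Real.cosh ((N - Y + 1/2)*l) := by
    have e1 : (N-(Y-1))*l = (N - Y + 1/2)*l + l/2 := by ring
    have e2 : (N-Y)*l = (N - Y + 1/2)*l - l/2 := by ring
    rw [e1, e2, sinh_diff]
  have hsl2 : Real.sinh l = 2 * Real.sinh (l/2) * Real.cosh (l/2) := by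
    rw [← Real.sinh_two_mul]; ring_nf
  have num : Real.sinh ((X-1)*l) * Real.sinh ((N-Y)*l) + Real.sinh (X*l) * Real.sinh ((N-(Y-1))*l)
      - Real.sinh (X*l) * Real.sinh ((N-Y)*l) - Real.sinh ((X-1)*l) * Real.sinh ((N-(Y-1))*l)
      = 4 * Real.sinh (l/2)^2 * Real.cosh ((X - 1/2)*l) * Real.cosh ((N - Y + 1/2)*l) := by
    linear_combination (Real.sinh ((N-(Y-1))*l) - Real.sinh ((N-Y)*l)) * d1
      + (2 * Real.sinh (l/2) * Real.cosh ((X - 1/2)*l)) * d2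
  rw [num, hsl2, Real.tanh_eq_sinh_div_cosh]
  field_simp
  ring

lemma keyD_off' (l N X Y : ℝ) (hl : 0 < l) (hN : Real.sinh (N*l) ≠ 0) :
    (Real.sinh (X*l) * Real.sinh ((N-(Y-1))*l) + Real.sinh ((X-1)*l) * Real.sinh ((N-Y)*l)
      - Real.sinh (X*l) * Real.sinh ((N-Y)*l) - Real.sinh ((X-1)*l) * Real.sinh ((N-(Y-1))*l))
      / (Real.sinh l * Real.sinh (N*l))
    = 2 * (Real.cosh ((X - 1/2)*l) * Real.cosh ((N - Y + 1/2)*l)) * Real.tanh (l/2)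
        / Real.sinh (N*l) := by
  rw [show Real.sinh (X*l) * Real.sinh ((N-(Y-1))*l) + Real.sinh ((X-1)*l) * Real.sinh ((N-Y)*l)
      - Real.sinh (X*l) * Real.sinh ((N-Y)*l) - Real.sinh ((X-1)*l) * Real.sinh ((N-(Y-1))*l)
      = Real.sinh ((X-1)*l) * Real.sinh ((N-Y)*l) + Real.sinh (X*l) * Real.sinh ((N-(Y-1))*l)
      - Real.sinh (X*l) * Real.sinh ((N-Y)*l) - Real.sinh ((X-1)*l) * Real.sinh ((N-(Y-1))*l)
      from by ring]
  exact keyD_off l N X Y hl hN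

lemma keyD_diag (l N X : ℝ) (hl : 0 < l) (hN : Real.sinh (N*l) ≠ 0) :
    (Real.sinh ((X-1)*l) * Real.sinh ((N-X)*l) + Real.sinh ((X-1)*l) * Real.sinh ((N-X)*l)
      - Real.sinh (X*l) * Real.sinh ((N-X)*l)
      - Real.sinh ((X-1)*l) * Real.sinh ((N-(X-1))*l)) / (Real.sinh l * Real.sinh (N*l))
    = -1 + 2 * (Real.cosh ((X - 1/2)*l) * Real.cosh ((N - X + 1/2)*l)) * Real.tanh (l/2)
        / Real.sinh (N*l) := by
  have hs2 : (0:ℝ) < Real.sinh (l/2) := by positivity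
  have hc2 : (0:ℝ) < Real.cosh (l/2) := Real.cosh_pos _
  have d1 : Real.sinh (X*l) - Real.sinh ((X-1)*l)
      = 2 * Real.sinh (l/2) * Real.cosh ((X - 1/2)*l) := by
    have e1 : X*l = (X - 1/2)*l + l/2 := by ring
    have e2 : (X-1)*l = (X - 1/2)*l - l/2 := by ring
    rw [e1, e2, sinh_diff]
  have d2 : Real.sinh ((N-(X-1))*l) - Real.sinh ((N-X)*l)
      = 2 * Real.sinh (l/2) * Real.cosh ((N - X + 1/2)*l) := by
    have e1 : (N-(X-1))*l = (N - X + 1/2)*l + l/2 := by ring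
    have e2 : (N-X)*l = (N - X + 1/2)*l - l/2 := by ring
    rw [e1, e2, sinh_diff]
  have hsl2 : Real.sinh l = 2 * Real.sinh (l/2) * Real.cosh (l/2) := by
    rw [← Real.sinh_two_mul]; ring_nf
  have num : Real.sinh ((X-1)*l) * Real.sinh ((N-X)*l) + Real.sinh ((X-1)*l) * Real.sinh ((N-X)*l)
      - Real.sinh (X*l) * Real.sinh ((N-X)*l)
      - Real.sinh ((X-1)*l) * Real.sinh ((N-(X-1))*l)
      = 4 * Real.sinh (l/2)^2 * Real.cosh ((X - 1/2)*l) * Real.cosh ((N - X + 1/2)*l)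
        - Real.sinh l * Real.sinh (N*l) := by
    linear_combination (Real.sinh ((N-(X-1))*l) - Real.sinh ((N-X)*l)) * d1
      + (2 * Real.sinh (l/2) * Real.cosh ((X - 1/2)*l)) * d2 - cross_id l N X
  rw [num, Real.tanh_eq_sinh_div_cosh, hsl2]
  have hd : 2 * Real.sinh (l/2) * Real.cosh (l/2) * Real.sinh (N*l) ≠ 0 := by positivity
  rw [sub_div, div_self hd]
  field_simp
  ring

lemma collect (b s S A B C D : ℝ) (hb : b ≠ 0) (hs : s ≠ 0) (hS : S ≠ 0) :
    b * (A / (b * s * S) + B / (b * s * S) - C / (b * s * S) - D / (b * s * S))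
      = (A + B - C - D) / (s * S) := by
  field_simp

/-- Closed form of `Dᵢⱼ`: `−[i = j] + 2·D̃ᵢⱼ·tanh(λ/2)/sinh(nλ)`. -/
theorem Dmat_closed_form
    (n : ℕ) (hn : 2 ≤ n) (α ctil : ℝ) (hα0 : 0 ≤ α) (hα1 : α < 1) (hc : 0 < ctil) :
    ∀ i j : ℕ, 1 ≤ i → i ≤ n → 1 ≤ j → j ≤ n →
      Dmat n α ctil i j =
        -(if i = j then (1 : ℝ) else 0) +
          2 * Dtil n (_root_.arcosh ((1 + ctil⁻¹) / (1 - α))) i j *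
              Real.tanh (_root_.arcosh ((1 + ctil⁻¹) / (1 - α)) / 2) /
            Real.sinh ((n : ℝ) * _root_.arcosh ((1 + ctil⁻¹) / (1 - α))) := by
  intro i j hi1 hi2 hj1 hj2
  set l := _root_.arcosh ((1 + ctil⁻¹) / (1 - α)) with hldef
  have h1α : (0:ℝ) < 1 - α := by linarith
  have hb : (0:ℝ) < (1 - α) / 2 := by linarith
  have hci : (0:ℝ) < ctil⁻¹ := by positivity
  have ha : 1 < (1 + ctil⁻¹) / (1 - α) := by
    rw [lt_div_iff₀ h1α]; nlinarith
  obtain ⟨hcosh, -, hl⟩ := arcosh_facts ha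
  rw [← hldef] at hcosh hl
  have hdiag : 1 + ctil⁻¹ = 2 * ((1 - α) / 2) * Real.cosh l := by
    rw [hcosh]
    field_simp
  have hBinv : (Bmat n α ctil)⁻¹ = Mmat n l ((1 - α) / 2) :=
    Matrix.inv_eq_right_inv (Bmat_mul_Mmat n α ctil l hn hl hb hdiag)
  have hsl : Real.sinh l ≠ 0 := by positivity
  have hnl : (0:ℝ) < (n:ℝ) * l := by
    have : (0:ℝ) < (n:ℝ) := by exact_mod_cast (by omega : 0 < n)
    positivity
  have hN : Real.sinh ((n:ℝ) * l) ≠ 0 := by positivity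
  have hb' : ((1 - α) / 2 : ℝ) ≠ 0 := ne_of_gt hb
  have hBA : ∀ p q : ℕ, p ≤ n → q ≤ n →
      BinvAt n α ctil p q = gfun n l ((1 - α) / 2) p q := by
    intro p q hp hq
    rw [BinvAt]
    split_ifs with h
    · obtain ⟨h1, h2, h3, h4⟩ := h
      rw [hBinv]
      show gfun n l ((1 - α)/2) (p - 1 + 1) (q - 1 + 1) = _
      rw [Nat.sub_add_cancel h1, Nat.sub_add_cancel h3]
    · symm
      have hcases : p = 0 ∨ p = n ∨ q = 0 ∨ q = n := by omega
      rcases hcases with h' | h' | h' | h'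
      · rw [h']; exact gfun_zero_left ..
      · rw [h']; exact gfun_top_left n l _ q hq
      · rw [h']; exact gfun_zero_right ..
      · rw [h']; exact gfun_top_right n l _ p hp
  have ci : ((i - 1 : ℕ) : ℝ) = (i : ℝ) - 1 := by rw [Nat.cast_sub hi1]; norm_num
  have cj : ((j - 1 : ℕ) : ℝ) = (j : ℝ) - 1 := by rw [Nat.cast_sub hj1]; norm_num
  simp only [Dmat]
  rw [hBA (i-1) j (by omega) hj2, hBA i (j-1) hi2 (by omega), hBA i j hi2 hj2,
    hBA (i-1) (j-1) (by omega) (by omega)]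
  rcases lt_trichotomy i j with h | h | h
  · -- i < j
    have e1 : min (i-1) j = i-1 := by omega
    have e2 : max (i-1) j = j := by omega
    have e3 : min i (j-1) = i := by omega
    have e4 : max i (j-1) = j-1 := by omega
    have e5 : min i j = i := by omega
    have e6 : max i j = j := by omega
    have e7 : min (i-1) (j-1) = i-1 := by omega
    have e8 : max (i-1) (j-1) = j-1 := by omega
    simp only [gfun, Dtil, e1, e2, e3, e4, e5, e6, e7, e8, ci, cj, if_neg h.ne,
      neg_zero, zero_add]
    rw [collect _ _ _ _ _ _ _ hb' hsl hN]
    exact keyD_off l (n:ℝ) (i:ℝ) (j:ℝ) hl hN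
  · -- i = j
    subst h
    have e1 : min (i-1) i = i-1 := by omega
    have e2 : max (i-1) i = i := by omega
    have e3 : min i (i-1) = i-1 := by omega
    have e4 : max i (i-1) = i := by omega
    have e5 : min i i = i := by omega
    have e6 : max i i = i := by omega
    have e7 : min (i-1) (i-1) = i-1 := by omega
    have e8 : max (i-1) (i-1) = i-1 := by omega
    simp only [gfun, Dtil, e1, e2, e3, e4, e5, e6, e7, e8, ci, if_true]
    rw [collect _ _ _ _ _ _ _ hb' hsl hN]
    exact keyD_diag l (n:ℝ) (i:ℝ) hl hN
  · -- j < i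
    have hne : ¬ i = j := by omega
    have e1 : min (i-1) j = j := by omega
    have e2 : max (i-1) j = i-1 := by omega
    have e3 : min i (j-1) = j-1 := by omega
    have e4 : max i (j-1) = i := by omega
    have e5 : min i j = j := by omega
    have e6 : max i j = i := by omega
    have e7 : min (i-1) (j-1) = j-1 := by omega
    have e8 : max (i-1) (j-1) = i-1 := by omega
    simp only [gfun, Dtil, e1, e2, e3, e4, e5, e6, e7, e8, ci, cj, if_neg hne,
      neg_zero, zero_add]
    rw [collect _ _ _ _ _ _ _ hb' hsl hN]
    exact keyD_off' l (n:ℝ) (j:ℝ) (i:ℝ) hl hN
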